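/- Let 0 < q < p ≤ 1 and n ≥ 2, α, β ≥ 0. For all x ∈ [0,1], the second central moment satisfies the bound S_{n,p,q}((t-x)²; x) ≤ (p^{n-1}[n]_{p,q} + β² + 2αβ + α²)/([n]_{p,q} + β)², using q[n]_{p,q}[n-1]_{p,q} ≤ [n]_{p,q}². -/

import Mathlib

open Finset Filter
set_option linter.unusedSectionVars false

noncomputable def pqInt (p q : ℝ) (n : ℕ) : ℝ := ∑ i ∈ Finset.range n, p ^ (n - 1 - i) * q ^ i

noncomputable def pqFact (p q : ℝ) (n : ℕ) : ℝ := ∏ j ∈ Finset.range n, pqInt p q (j + 1)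

noncomputable def pqChoose (p q : ℝ) (n k : ℕ) : ℝ :=
  pqFact p q n / (pqFact p q k * pqFact p q (n - k))

noncomputable def pqBasis (p q : ℝ) (n k : ℕ) (x : ℝ) : ℝ :=
  (1 / p ^ (n * (n - 1) / 2)) * pqChoose p q n k * p ^ (k * (k - 1) / 2) * x ^ k *
    ∏ s ∈ Finset.range (n - k), (p ^ s - q ^ s * x)

noncomputable def S (p q α β : ℝ) (n : ℕ) (f : ℝ → ℝ) (x : ℝ) : ℝ :=
  ∑ k ∈ Finset.range (n + 1),
    pqBasis p q n k x * f ((p ^ (n - k) * pqInt p q k + α) / (pqInt p q n + β))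

section aux
variable (p q : ℝ)

lemma pqInt_zero : pqInt p q 0 = 0 := by simp [pqInt]

lemma pqFact_succ (m : ℕ) : pqFact p q (m + 1) = pqFact p q m * pqInt p q (m + 1) :=
  Finset.prod_range_succ _ m

lemma pqInt_succ (n : ℕ) : pqInt p q (n + 1) = p ^ n + q * pqInt p q n := by
  unfold pqInt
  rw [Finset.sum_range_succ', Finset.mul_sum]
  simp only [Nat.add_sub_cancel, pow_zero, mul_one, Nat.sub_zero]
  rw [add_comm]
  congr 1
  refine Finset.sum_congr rfl fun i hi => ?_
  rw [show n - (i + 1) = n - 1 - i by omega]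
  ring

lemma pqInt_succ' (n : ℕ) : pqInt p q (n + 1) = p * pqInt p q n + q ^ n := by
  unfold pqInt
  rw [Finset.sum_range_succ, Finset.mul_sum]
  simp only [Nat.add_sub_cancel, Nat.sub_self, pow_zero, one_mul]
  congr 1
  refine Finset.sum_congr rfl fun i hi => ?_
  have hi' : i < n := Finset.mem_range.1 hi
  rw [show n - i = (n - 1 - i) + 1 by omega]
  ring

variable (hp : 0 < p) (hq : 0 < q)
include hp hq

lemma pqInt_pos {n : ℕ} (hn : n ≠ 0) : 0 < pqInt p q n :=
  Finset.sum_pos (fun i _ => by positivity) (Finset.nonempty_range_iff.2 hn)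

lemma pqInt_nonneg (n : ℕ) : 0 ≤ pqInt p q n :=
  Finset.sum_nonneg (fun i _ => by positivity)

lemma pqFact_pos (n : ℕ) : 0 < pqFact p q n :=
  Finset.prod_pos fun j _ => pqInt_pos p q hp hq (Nat.succ_ne_zero j)

lemma pqInt_add (m k : ℕ) :
    pqInt p q (m + k) = p ^ k * pqInt p q m + q ^ m * pqInt p q k := by
  induction k with
  | zero => simp [pqInt_zero]
  | succ k ih =>
    have h : p ^ m + q * pqInt p q m = p * pqInt p q m + q ^ m :=
      (pqInt_succ p q m).symm.trans (pqInt_succ' p q m)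
    have h1 : pqInt p q (m + (k + 1)) = p ^ (m + k) + q * pqInt p q (m + k) := pqInt_succ p q (m + k)
    rw [h1, ih, pqInt_succ p q k, pow_add]
    linear_combination p ^ k * h

lemma pqChoose_zero (n : ℕ) : pqChoose p q n 0 = 1 := by
  have h0 : pqFact p q 0 = 1 := by simp [pqFact]
  unfold pqChoose
  rw [h0, Nat.sub_zero, one_mul, div_self (pqFact_pos p q hp hq n).ne']

lemma pqChoose_self (n : ℕ) : pqChoose p q n n = 1 := by
  have h0 : pqFact p q 0 = 1 := by simp [pqFact]
  unfold pqChoose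
  rw [Nat.sub_self, h0, mul_one, div_self (pqFact_pos p q hp hq n).ne']

lemma pascal' (k m : ℕ) :
    pqChoose p q (m + k + 2) (k + 1) =
      p ^ (k + 1) * pqChoose p q (m + k + 1) (k + 1) + q ^ (m + 1) * pqChoose p q (m + k + 1) k := by
  unfold pqChoose
  rw [show m + k + 2 - (k + 1) = m + 1 by omega, show m + k + 1 - (k + 1) = m by omega,
    show m + k + 1 - k = m + 1 by omega, show m + k + 2 = (m + k + 1) + 1 by omega,
    pqFact_succ p q (m + k + 1), pqFact_succ p q k, pqFact_succ p q m]
  have key : pqInt p q (m + k + 1 + 1) =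
      p ^ (k + 1) * pqInt p q (m + 1) + q ^ (m + 1) * pqInt p q (k + 1) := by
    have := pqInt_add p q hp hq (m + 1) (k + 1)
    rw [show m + 1 + (k + 1) = m + k + 1 + 1 by omega] at this
    exact this
  rw [key]
  have h1 := (pqFact_pos p q hp hq k).ne'
  have h2 := (pqFact_pos p q hp hq m).ne'
  have h4 := (pqInt_pos p q hp hq (Nat.succ_ne_zero k)).ne'
  have h5 := (pqInt_pos p q hp hq (Nat.succ_ne_zero m)).ne'
  field_simp

lemma choose_mul (n k : ℕ) :
    pqChoose p q (n + 1) (k + 1) * pqInt p q (k + 1) =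
      pqInt p q (n + 1) * pqChoose p q n k := by
  unfold pqChoose
  rw [show n + 1 - (k + 1) = n - k by omega, pqFact_succ p q n, pqFact_succ p q k]
  have h2 := (pqFact_pos p q hp hq k).ne'
  have h3 := (pqFact_pos p q hp hq (n - k)).ne'
  have h4 := (pqInt_pos p q hp hq (Nat.succ_ne_zero k)).ne'
  field_simp

end aux
noncomputable def gg (p q x : ℝ) (n k : ℕ) : ℝ :=
  pqChoose p q n k * p ^ (k * (k - 1) / 2) * x ^ k * ∏ s ∈ Finset.range (n - k), (p ^ s - q ^ s * x)

lemma tri (k : ℕ) : (k + 1) * k / 2 = k * (k - 1) / 2 + k := by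
  rcases k with _ | m
  · simp
  · rw [Nat.succ_sub_one]
    rw [show (m + 1 + 1) * (m + 1) = (m + 1) * m + (m + 1) * 2 by ring,
      Nat.add_mul_div_right _ _ (by norm_num : 0 < 2)]

section gsec
variable (p q x : ℝ) (hp : 0 < p) (hq : 0 < q)
include hp hq

lemma gg_zero (n : ℕ) : gg p q x n 0 = ∏ s ∈ Finset.range n, (p ^ s - q ^ s * x) := by
  simp [gg, pqChoose_zero p q hp hq]

lemma gg_self (n : ℕ) : gg p q x n n = p ^ (n * (n - 1) / 2) * x ^ n := by
  simp [gg, pqChoose_self p q hp hq]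

lemma gg_succ_succ {k n : ℕ} (hk : k < n) :
    gg p q x (n + 1) (k + 1) =
      p ^ (k + 1) * (p ^ (n - 1 - k) - q ^ (n - 1 - k) * x) * gg p q x n (k + 1)
        + q ^ (n - k) * p ^ k * x * gg p q x n k := by
  obtain ⟨m, rfl⟩ : ∃ m, n = m + k + 1 := ⟨n - k - 1, by omega⟩
  unfold gg
  rw [show m + k + 1 + 1 = m + k + 2 by omega, pascal' p q hp hq k m,
    show m + k + 2 - (k + 1) = m + 1 by omega, show m + k + 1 - (k + 1) = m by omega,
    show m + k + 1 - 1 - k = m by omega, show m + k + 1 - k = m + 1 by omega,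
    Finset.prod_range_succ, Nat.add_sub_cancel, tri k]
  ring

lemma L_T (n : ℕ) : ∑ k ∈ Finset.range (n + 1), gg p q x n k = p ^ (n * (n - 1) / 2) := by
  induction n with
  | zero => simp [gg_self p q x hp hq 0]
  | succ n ih =>
    rw [Finset.sum_range_succ', Finset.sum_range_succ]
    have step : ∑ k ∈ Finset.range n, gg p q x (n + 1) (k + 1) =
        (∑ k ∈ Finset.range n,
          p ^ (k + 1) * (p ^ (n - 1 - k) - q ^ (n - 1 - k) * x) * gg p q x n (k + 1))
        + ∑ k ∈ Finset.range n, q ^ (n - k) * p ^ k * x * gg p q x n k := by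
      rw [← Finset.sum_add_distrib]
      exact Finset.sum_congr rfl fun k hk => gg_succ_succ p q x hp hq (Finset.mem_range.1 hk)
    rw [step, gg_self p q x hp hq (n + 1), gg_zero p q x hp hq (n + 1),
      Finset.prod_range_succ]
    have eA : (∑ k ∈ Finset.range n,
          p ^ (k + 1) * (p ^ (n - 1 - k) - q ^ (n - 1 - k) * x) * gg p q x n (k + 1))
        + (∏ s ∈ Finset.range n, (p ^ s - q ^ s * x)) * (p ^ n - q ^ n * x) =
        ∑ k ∈ Finset.range (n + 1), p ^ k * (p ^ (n - k) - q ^ (n - k) * x) * gg p q x n k := by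
      rw [Finset.sum_range_succ']
      congr 1
      · exact Finset.sum_congr rfl fun k hk => by
          rw [show n - (k + 1) = n - 1 - k by omega]
      · rw [gg_zero p q x hp hq n]; simp; ring
    have eB : (∑ k ∈ Finset.range n, q ^ (n - k) * p ^ k * x * gg p q x n k)
        + p ^ ((n + 1) * (n + 1 - 1) / 2) * x ^ (n + 1) =
        ∑ k ∈ Finset.range (n + 1), q ^ (n - k) * p ^ k * x * gg p q x n k := by
      rw [Finset.sum_range_succ]
      congr 1
      rw [Nat.sub_self, pow_zero, one_mul, gg_self p q x hp hq n,
        show n + 1 - 1 = n by omega, tri n, pow_add]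
      ring
    calc (∑ k ∈ Finset.range n,
            p ^ (k + 1) * (p ^ (n - 1 - k) - q ^ (n - 1 - k) * x) * gg p q x n (k + 1))
          + ∑ k ∈ Finset.range n, q ^ (n - k) * p ^ k * x * gg p q x n k
          + p ^ ((n + 1) * (n + 1 - 1) / 2) * x ^ (n + 1)
          + (∏ s ∈ Finset.range n, (p ^ s - q ^ s * x)) * (p ^ n - q ^ n * x)
        = (∑ k ∈ Finset.range (n + 1), p ^ k * (p ^ (n - k) - q ^ (n - k) * x) * gg p q x n k)
          + ∑ k ∈ Finset.range (n + 1), q ^ (n - k) * p ^ k * x * gg p q x n k := by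
          rw [← eA, ← eB]; ring
      _ = ∑ k ∈ Finset.range (n + 1), p ^ n * gg p q x n k := by
          rw [← Finset.sum_add_distrib]
          refine Finset.sum_congr rfl fun k hk => ?_
          have hk' : k < n + 1 := Finset.mem_range.1 hk
          have hpk : p ^ k * p ^ (n - k) = p ^ n := by
            rw [← pow_add]; congr 1; omega
          linear_combination gg p q x n k * hpk
      _ = p ^ ((n + 1) * (n + 1 - 1) / 2) := by
          rw [← Finset.mul_sum, ih, show n + 1 - 1 = n by omega, tri n, pow_add]; ring

end gsec
section msec
variable (p q x : ℝ) (hp : 0 < p) (hq : 0 < q)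
include hp hq

lemma gg_mul_int (n k : ℕ) :
    gg p q x (n + 1) (k + 1) * pqInt p q (k + 1) =
      pqInt p q (n + 1) * (p ^ k * x * gg p q x n k) := by
  have cm := choose_mul p q hp hq n k
  unfold gg
  rw [show n + 1 - (k + 1) = n - k by omega, Nat.add_sub_cancel, tri k, pow_add]
  linear_combination (p ^ (k * (k - 1) / 2) * p ^ k * x ^ (k + 1) *
    ∏ s ∈ Finset.range (n - k), (p ^ s - q ^ s * x)) * cm

lemma L_U (n : ℕ) :
    ∑ k ∈ Finset.range (n + 2), gg p q x (n + 1) k * (p ^ (n + 1 - k) * pqInt p q k)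
      = p ^ ((n + 1) * n / 2) * (pqInt p q (n + 1) * x) := by
  rw [Finset.sum_range_succ']
  have h0 : gg p q x (n + 1) 0 * (p ^ (n + 1 - 0) * pqInt p q 0) = 0 := by
    simp [pqInt_zero]
  rw [h0, add_zero]
  have step : ∀ k ∈ Finset.range (n + 1),
      gg p q x (n + 1) (k + 1) * (p ^ (n + 1 - (k + 1)) * pqInt p q (k + 1))
        = pqInt p q (n + 1) * x * p ^ n * gg p q x n k := by
    intro k hk
    have hk' : k < n + 1 := Finset.mem_range.1 hk
    have h1 := gg_mul_int p q x hp hq n k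
    have hpk : p ^ (n + 1 - (k + 1)) * p ^ k = p ^ n := by
      rw [← pow_add]; congr 1; omega
    calc gg p q x (n + 1) (k + 1) * (p ^ (n + 1 - (k + 1)) * pqInt p q (k + 1))
        = p ^ (n + 1 - (k + 1)) * (gg p q x (n + 1) (k + 1) * pqInt p q (k + 1)) := by ring
      _ = p ^ (n + 1 - (k + 1)) * (pqInt p q (n + 1) * (p ^ k * x * gg p q x n k)) := by rw [h1]
      _ = pqInt p q (n + 1) * x * (p ^ (n + 1 - (k + 1)) * p ^ k) * gg p q x n k := by ring
      _ = pqInt p q (n + 1) * x * p ^ n * gg p q x n k := by rw [hpk]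
  rw [Finset.sum_congr rfl step, ← Finset.mul_sum, L_T p q x hp hq n,
    show (n + 1) * n / 2 = n * (n - 1) / 2 + n from tri n, pow_add]
  ring

lemma L_V (n : ℕ) :
    ∑ k ∈ Finset.range (n + 3), gg p q x (n + 2) k * (p ^ (n + 2 - k) * pqInt p q k) ^ 2
      = p ^ ((n + 2) * (n + 1) / 2) *
        (pqInt p q (n + 2) * x * (p ^ (n + 1) + q * pqInt p q (n + 1) * x)) := by
  rw [Finset.sum_range_succ']
  have h0 : gg p q x (n + 2) 0 * (p ^ (n + 2 - 0) * pqInt p q 0) ^ 2 = 0 := by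
    simp [pqInt_zero]
  rw [h0, add_zero]
  have step : ∀ k ∈ Finset.range (n + 2),
      gg p q x (n + 2) (k + 1) * (p ^ (n + 2 - (k + 1)) * pqInt p q (k + 1)) ^ 2
        = pqInt p q (n + 2) * x * p ^ (n + 1) * p ^ (n + 1) * gg p q x (n + 1) k
          + pqInt p q (n + 2) * x * p ^ (n + 1) * q *
              (gg p q x (n + 1) k * (p ^ (n + 1 - k) * pqInt p q k)) := by
    intro k hk
    have hk' : k < n + 2 := Finset.mem_range.1 hk
    have h1 := gg_mul_int p q x hp hq (n + 1) k
    have hstep := pqInt_succ p q k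
    have he : n + 2 - (k + 1) = n + 1 - k := by omega
    have hpk : p ^ (n + 1 - k) * p ^ k = p ^ (n + 1) := by
      rw [← pow_add]; congr 1; omega
    rw [he]
    calc gg p q x (n + 2) (k + 1) * (p ^ (n + 1 - k) * pqInt p q (k + 1)) ^ 2
        = (p ^ (n + 1 - k) * p ^ (n + 1 - k) * pqInt p q (k + 1)) *
            (gg p q x (n + 2) (k + 1) * pqInt p q (k + 1)) := by ring
      _ = (p ^ (n + 1 - k) * p ^ (n + 1 - k) * (p ^ k + q * pqInt p q k)) *
            (pqInt p q (n + 2) * (p ^ k * x * gg p q x (n + 1) k)) := by rw [h1, hstep]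
      _ = pqInt p q (n + 2) * x *
            ((p ^ (n + 1 - k) * p ^ k) * (p ^ (n + 1 - k) * p ^ k) * gg p q x (n + 1) k)
          + pqInt p q (n + 2) * x * q * (p ^ (n + 1 - k) * p ^ k) *
            (gg p q x (n + 1) k * (p ^ (n + 1 - k) * pqInt p q k)) := by ring
      _ = pqInt p q (n + 2) * x * p ^ (n + 1) * p ^ (n + 1) * gg p q x (n + 1) k
          + pqInt p q (n + 2) * x * p ^ (n + 1) * q *
              (gg p q x (n + 1) k * (p ^ (n + 1 - k) * pqInt p q k)) := by
            rw [hpk]; ring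
  rw [Finset.sum_congr rfl step, Finset.sum_add_distrib, ← Finset.mul_sum, ← Finset.mul_sum,
    L_U p q x hp hq n]
  have hT := L_T p q x hp hq (n + 1)
  rw [Nat.add_sub_cancel] at hT
  rw [hT, show (n + 2) * (n + 1) / 2 = (n + 1) * n / 2 + (n + 1) from tri (n + 1), pow_add]
  ring

end msec
theorem S_second_central_moment_bound (p q α β : ℝ) (hq : 0 < q) (hqp : q < p) (hp : p ≤ 1)
    (hα : 0 ≤ α) (hβ : 0 ≤ β) (n : ℕ) (hn : 2 ≤ n)
    (x : ℝ) (hx : x ∈ Set.Icc (0 : ℝ) 1) :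
    S p q α β n (fun t => (t - x) ^ 2) x ≤
      (p ^ (n - 1) * pqInt p q n + β ^ 2 + 2 * α * β + α ^ 2) / (pqInt p q n + β) ^ 2 := by
  obtain ⟨m, rfl⟩ : ∃ m, n = m + 2 := ⟨n - 2, by omega⟩
  obtain ⟨hx0, hx1⟩ := hx
  have hp0 : 0 < p := hq.trans hqp
  have hIn : 0 < pqInt p q (m + 2) := pqInt_pos p q hp0 hq (by omega)
  have hIn1 : 0 ≤ pqInt p q (m + 1) := pqInt_nonneg p q hp0 hq (m + 1)
  have hD : 0 < pqInt p q (m + 2) + β := by linarith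
  have hN : (0:ℝ) < p ^ ((m + 2) * (m + 1) / 2) := by positivity
  have hb : ∀ k, pqBasis p q (m + 2) k x =
      1 / p ^ ((m + 2) * (m + 1) / 2) * gg p q x (m + 2) k := by
    intro k
    unfold pqBasis gg
    rw [show m + 2 - 1 = m + 1 from rfl]
    ring
  have key : ∀ k ∈ Finset.range (m + 3),
      pqBasis p q (m + 2) k x *
          ((p ^ (m + 2 - k) * pqInt p q k + α) / (pqInt p q (m + 2) + β) - x) ^ 2
        = (1 / (p ^ ((m + 2) * (m + 1) / 2) * (pqInt p q (m + 2) + β) ^ 2)) *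
              (gg p q x (m + 2) k * (p ^ (m + 2 - k) * pqInt p q k) ^ 2)
          + (2 * (α - (pqInt p q (m + 2) + β) * x) /
                (p ^ ((m + 2) * (m + 1) / 2) * (pqInt p q (m + 2) + β) ^ 2)) *
              (gg p q x (m + 2) k * (p ^ (m + 2 - k) * pqInt p q k))
          + ((α - (pqInt p q (m + 2) + β) * x) ^ 2 /
                (p ^ ((m + 2) * (m + 1) / 2) * (pqInt p q (m + 2) + β) ^ 2)) *
              gg p q x (m + 2) k := by
    intro k hk
    rw [hb k]
    field_simp
    ring
  have hV := L_V p q x hp0 hq m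
  have hU := L_U p q x hp0 hq (m + 1)
  rw [show m + 1 + 1 = m + 2 from rfl, show m + 1 + 2 = m + 3 from rfl] at hU
  have hT := L_T p q x hp0 hq (m + 2)
  rw [show m + 2 - 1 = m + 1 from rfl, show m + 2 + 1 = m + 3 from rfl] at hT
  have hSval : S p q α β (m + 2) (fun t => (t - x) ^ 2) x =
      (pqInt p q (m + 2) * x * (p ^ (m + 1) + q * pqInt p q (m + 1) * x)
        + 2 * (α - (pqInt p q (m + 2) + β) * x) * (pqInt p q (m + 2) * x)
        + (α - (pqInt p q (m + 2) + β) * x) ^ 2) / (pqInt p q (m + 2) + β) ^ 2 := by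
    unfold S
    show (∑ k ∈ Finset.range (m + 3),
        pqBasis p q (m + 2) k x *
          ((p ^ (m + 2 - k) * pqInt p q k + α) / (pqInt p q (m + 2) + β) - x) ^ 2) = _
    rw [Finset.sum_congr rfl key, Finset.sum_add_distrib, Finset.sum_add_distrib,
      ← Finset.mul_sum, ← Finset.mul_sum, ← Finset.mul_sum, hV, hU, hT]
    field_simp
  rw [hSval, show m + 2 - 1 = m + 1 from rfl]
  have hD2 : (0:ℝ) < (pqInt p q (m + 2) + β) ^ 2 := by positivity
  rw [div_le_div_iff₀ hD2 hD2]
  have hsucc : pqInt p q (m + 2) = p ^ (m + 1) + q * pqInt p q (m + 1) := pqInt_succ p q (m + 1)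
  have hkey : pqInt p q (m + 2) * pqInt p q (m + 2) * x ^ 2
      - q * pqInt p q (m + 2) * pqInt p q (m + 1) * x ^ 2
      = p ^ (m + 1) * pqInt p q (m + 2) * x ^ 2 := by
    linear_combination (pqInt p q (m + 2) * x ^ 2) * hsucc
  have hppow : (0:ℝ) < p ^ (m + 1) := by positivity
  have t1 : 0 ≤ p ^ (m + 1) * pqInt p q (m + 2) * (1 - x) := by
    apply mul_nonneg (by positivity) (by linarith)
  have t2 : 0 ≤ p ^ (m + 1) * pqInt p q (m + 2) * x ^ 2 := by positivity
  have t3 : 0 ≤ β ^ 2 * (1 - x ^ 2) := by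
    apply mul_nonneg (sq_nonneg β) (by nlinarith)
  have t4 : 0 ≤ 2 * α * β * (1 + x) := by
    apply mul_nonneg (by positivity) (by linarith)
  nlinarith [t1, t2, t3, t4, hkey, sq_nonneg (pqInt p q (m + 2) + β)]
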